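/- For every integer L ≥ 1 and every t ∈ [0, 1/(2L²)], one has 1/2 ≤ g_L(t) ≤ 1. -/

import Mathlib

/-- The polynomial function `g_L(t) = ∏_{c=1}^{L} (1 - c² t²)^⌊L/c⌋`. -/
noncomputable def gL (L : ℕ) (t : ℝ) : ℝ :=
  ∏ c ∈ Finset.Icc 1 L, (1 - (c : ℝ) ^ 2 * t ^ 2) ^ (L / c)

/-- Weierstrass-type inequality: `∏ f ≥ 1 - ∑ g` when `1 - g i ≤ f i ≤ 1`, `0 ≤ f`, `0 ≤ g`. -/
lemma prod_ge_one_sub_sum (s : Finset ℕ) (f g : ℕ → ℝ)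
    (hf0 : ∀ i ∈ s, 0 ≤ f i) (hf1 : ∀ i ∈ s, f i ≤ 1)
    (hg0 : ∀ i ∈ s, 0 ≤ g i) (hfg : ∀ i ∈ s, 1 - g i ≤ f i) :
    1 - ∑ i ∈ s, g i ≤ ∏ i ∈ s, f i := by
  revert hf0 hf1 hg0 hfg
  refine Finset.induction_on s ?_ ?_
  · simp
  · intro a s ha ih hf0 hf1 hg0 hfg
    simp only [Finset.mem_insert] at hf0 hf1 hg0 hfg
    rw [Finset.prod_insert ha, Finset.sum_insert ha]
    have hp : 1 - ∑ i ∈ s, g i ≤ ∏ i ∈ s, f i :=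
      ih (fun i hi => hf0 i (Or.inr hi)) (fun i hi => hf1 i (Or.inr hi))
        (fun i hi => hg0 i (Or.inr hi)) (fun i hi => hfg i (Or.inr hi))
    have hP0 : 0 ≤ ∏ i ∈ s, f i := Finset.prod_nonneg (fun i hi => hf0 i (Or.inr hi))
    have hP1 : ∏ i ∈ s, f i ≤ 1 :=
      Finset.prod_le_one (fun i hi => hf0 i (Or.inr hi)) (fun i hi => hf1 i (Or.inr hi))
    have h1 := hfg a (Or.inl rfl)
    have h2 := hf1 a (Or.inl rfl)
    have h3 := hf0 a (Or.inl rfl)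
    nlinarith [mul_nonneg (sub_nonneg.2 h2) (sub_nonneg.2 hP1)]

/-- For every integer `L ≥ 1` and every `t ∈ [0, 1/(2L²)]`, `1/2 ≤ g_L(t) ≤ 1`. -/
theorem stmt5 (L : ℕ) (hL : 1 ≤ L) :
    ∀ t ∈ Set.Icc (0 : ℝ) (1 / (2 * (L : ℝ) ^ 2)),
      1 / 2 ≤ gL L t ∧ gL L t ≤ 1 := by
  intro t ht
  obtain ⟨ht0, ht1⟩ := ht
  have hL0 : (0:ℝ) < L := by exact_mod_cast hL
  have hL1 : (1:ℝ) ≤ L := by exact_mod_cast hL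
  have hLne : (L:ℝ) ≠ 0 := ne_of_gt hL0
  -- basic bound: for c ∈ Icc 1 L, c² t² ≤ 1/4
  have hx : ∀ c ∈ Finset.Icc 1 L, (c:ℝ) ^ 2 * t ^ 2 ≤ 1 / 4 := by
    intro c hc
    rw [Finset.mem_Icc] at hc
    have hcL : (c:ℝ) ≤ L := by exact_mod_cast hc.2
    have hct : (c:ℝ) * t ≤ 1 / 2 := by
      have h1 : (c:ℝ) * t ≤ (L:ℝ) * (1 / (2 * (L:ℝ)^2)) :=
        mul_le_mul hcL ht1 ht0 (le_of_lt hL0)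
      have hle : (L:ℝ) * (1 / (2 * (L:ℝ)^2)) = 1 / (2 * L) := by
        field_simp
      rw [hle] at h1
      refine h1.trans ?_
      exact one_div_le_one_div_of_le (by norm_num) (by nlinarith)
    have hct0 : 0 ≤ (c:ℝ) * t := by positivity
    nlinarith
  have hx0 : ∀ c ∈ Finset.Icc 1 L, (0:ℝ) ≤ (c:ℝ) ^ 2 * t ^ 2 := by
    intro c hc; positivity
  -- each factor is in [0,1]
  have hf0 : ∀ c ∈ Finset.Icc 1 L, (0:ℝ) ≤ (1 - (c:ℝ)^2 * t^2) ^ (L / c) := by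
    intro c hc
    have h1 := hx c hc
    have h2 : (0:ℝ) ≤ 1 - (c:ℝ)^2 * t^2 := by linarith
    positivity
  have hf1 : ∀ c ∈ Finset.Icc 1 L, (1 - (c:ℝ)^2 * t^2) ^ (L / c) ≤ 1 := by
    intro c hc
    apply pow_le_one₀
    · linarith [hx c hc]
    · linarith [hx0 c hc]
  constructor
  · -- lower bound
    have key : 1 - ∑ c ∈ Finset.Icc 1 L, ((L / c : ℕ) : ℝ) * ((c:ℝ)^2 * t^2) ≤ gL L t := by
      apply prod_ge_one_sub_sum _ _ _ hf0 hf1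
      · intro c hc
        have := hx0 c hc
        positivity
      · intro c hc
        have hb := one_add_mul_le_pow (a := -((c:ℝ)^2 * t^2)) (by linarith [hx c hc]) (L / c)
        calc 1 - ((L / c : ℕ) : ℝ) * ((c:ℝ)^2 * t^2)
            = 1 + (L / c : ℕ) * (-((c:ℝ)^2 * t^2)) := by ring
          _ ≤ (1 + -((c:ℝ)^2 * t^2)) ^ (L / c) := hb
          _ = (1 - (c:ℝ)^2 * t^2) ^ (L / c) := by ring_nf
    -- bound the sum
    set S : ℕ := ∑ c ∈ Finset.Icc 1 L, (L / c) * c ^ 2 with hS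
    have hsumN : S ≤ L ^ 3 := by
      calc S ≤ ∑ c ∈ Finset.Icc 1 L, L * L := by
            apply Finset.sum_le_sum
            intro c hc
            rw [Finset.mem_Icc] at hc
            have h1 : L / c * c ≤ L := Nat.div_mul_le_self L c
            calc L / c * c ^ 2 = (L / c * c) * c := by ring
              _ ≤ L * L := Nat.mul_le_mul h1 hc.2
        _ = L * (L * L) := by
            rw [Finset.sum_const, Nat.card_Icc, smul_eq_mul, Nat.add_sub_cancel]
        _ = L ^ 3 := by ring
    have hsum : ∑ c ∈ Finset.Icc 1 L, ((L / c : ℕ) : ℝ) * ((c:ℝ)^2 * t^2) ≤ 1 / 4 := by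
      have heq : ∑ c ∈ Finset.Icc 1 L, ((L / c : ℕ) : ℝ) * ((c:ℝ)^2 * t^2)
          = (S : ℝ) * t ^ 2 := by
        rw [hS]
        push_cast
        rw [Finset.sum_mul]
        apply Finset.sum_congr rfl
        intro c hc; ring
      rw [heq]
      have ht2 : t ^ 2 ≤ (1 / (2 * (L:ℝ)^2)) ^ 2 := by
        apply pow_le_pow_left₀ ht0 ht1
      have hcast : (S : ℝ) ≤ (L:ℝ) ^ 3 := by exact_mod_cast hsumN
      have hS0 : (0:ℝ) ≤ (S : ℝ) := by positivity
      have h14 : (L:ℝ) ^ 3 * (1 / (2 * (L:ℝ)^2)) ^ 2 ≤ 1 / 4 := by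
        have heq2 : (L:ℝ) ^ 3 * (1 / (2 * (L:ℝ)^2)) ^ 2 = 1 / (4 * L) := by
          field_simp; ring
        rw [heq2]
        exact one_div_le_one_div_of_le (by norm_num) (by nlinarith)
      calc (S : ℝ) * t ^ 2
          ≤ (L:ℝ) ^ 3 * (1 / (2 * (L:ℝ)^2)) ^ 2 :=
            mul_le_mul hcast ht2 (by positivity) (by positivity)
        _ ≤ 1 / 4 := h14
    linarith
  · -- upper bound
    exact Finset.prod_le_one hf0 hf1
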